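/- arXiv:2001.08259 — 2 statements merged into one kernel-verified Lean document; each statement's English description precedes it below -/
import Mathlib

section
/- Let A₁, A₂, c₁, c₂ be strictly positive real numbers and k a real number, and let f(s) = A₁·(2^(c₁·s) − 1) + A₂·(2^(c₂·s) − 1) + k·s. If A₁·c₁·(ln 2) + A₂·c₂·(ln 2) + k < 0 (the derivative of f at s = 0 is negative), then there exists a unique s* > 0 such that the derivative of f at s* is zero, and f(s*) < f(s) for every s ≥ 0 with s ≠ s*; that is, s* is the unique minimizer of f over [0, ∞). -/
private lemma stmt4_hasDerivAt (A₁ A₂ c₁ c₂ k : ℝ) (s : ℝ) :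
    HasDerivAt (fun s : ℝ => A₁ * ((2 : ℝ) ^ (c₁ * s) - 1) + A₂ * ((2 : ℝ) ^ (c₂ * s) - 1) + k * s)
      (A₁ * c₁ * Real.log 2 * Real.exp (Real.log 2 * (c₁ * s))
        + A₂ * c₂ * Real.log 2 * Real.exp (Real.log 2 * (c₂ * s)) + k) s := by
  have hfun : (fun s : ℝ => A₁ * ((2 : ℝ) ^ (c₁ * s) - 1) + A₂ * ((2 : ℝ) ^ (c₂ * s) - 1) + k * s)
      = (fun s : ℝ => A₁ * (Real.exp (Real.log 2 * (c₁ * s)) - 1)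
          + A₂ * (Real.exp (Real.log 2 * (c₂ * s)) - 1) + k * s) := by
    funext x
    rw [Real.rpow_def_of_pos (by norm_num : (0:ℝ) < 2), Real.rpow_def_of_pos (by norm_num : (0:ℝ) < 2)]
  rw [hfun]
  have h1 : HasDerivAt (fun x : ℝ => Real.exp (Real.log 2 * (c₁ * x)))
      (Real.exp (Real.log 2 * (c₁ * s)) * (Real.log 2 * c₁)) s := by
    have hl : HasDerivAt (fun x : ℝ => Real.log 2 * (c₁ * x)) (Real.log 2 * c₁) s := by
      simpa [mul_assoc] using (hasDerivAt_id s).const_mul (Real.log 2 * c₁)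
    exact (Real.hasDerivAt_exp _).comp s hl
  have h2 : HasDerivAt (fun x : ℝ => Real.exp (Real.log 2 * (c₂ * x)))
      (Real.exp (Real.log 2 * (c₂ * s)) * (Real.log 2 * c₂)) s := by
    have hl : HasDerivAt (fun x : ℝ => Real.log 2 * (c₂ * x)) (Real.log 2 * c₂) s := by
      simpa [mul_assoc] using (hasDerivAt_id s).const_mul (Real.log 2 * c₂)
    exact (Real.hasDerivAt_exp _).comp s hl
  have hk : HasDerivAt (fun x : ℝ => k * x) k s := by
    simpa using (hasDerivAt_id s).const_mul k
  have := (((h1.sub_const 1).const_mul A₁).add ((h2.sub_const 1).const_mul A₂)).add hk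
  refine HasDerivAt.congr_deriv this ?_
  ring

/-- second case of Lemma 1: if the derivative of
`f(s) = A₁·(2^(c₁s) − 1) + A₂·(2^(c₂s) − 1) + k·s` at `s = 0` is negative, then there is a
unique `s* > 0` at which the derivative of `f` vanishes and which strictly minimizes `f`
over `[0, ∞)`. -/
theorem stmt4 (A₁ A₂ c₁ c₂ k : ℝ) (hA₁ : 0 < A₁) (hA₂ : 0 < A₂) (hc₁ : 0 < c₁) (hc₂ : 0 < c₂)
    (hgrad : A₁ * c₁ * Real.log 2 + A₂ * c₂ * Real.log 2 + k < 0) :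
    ∃! sstar : ℝ, 0 < sstar ∧
      deriv (fun s : ℝ => A₁ * ((2 : ℝ) ^ (c₁ * s) - 1) + A₂ * ((2 : ℝ) ^ (c₂ * s) - 1) + k * s)
        sstar = 0 ∧
      ∀ s : ℝ, 0 ≤ s → s ≠ sstar →
        (A₁ * ((2 : ℝ) ^ (c₁ * sstar) - 1) + A₂ * ((2 : ℝ) ^ (c₂ * sstar) - 1) + k * sstar)
          < A₁ * ((2 : ℝ) ^ (c₁ * s) - 1) + A₂ * ((2 : ℝ) ^ (c₂ * s) - 1) + k * s := by
  set L := Real.log 2 with hL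
  have hLpos : 0 < L := Real.log_pos (by norm_num)
  set f : ℝ → ℝ :=
    fun s : ℝ => A₁ * ((2 : ℝ) ^ (c₁ * s) - 1) + A₂ * ((2 : ℝ) ^ (c₂ * s) - 1) + k * s with hf
  set g : ℝ → ℝ := fun s => A₁ * c₁ * L * Real.exp (L * (c₁ * s))
      + A₂ * c₂ * L * Real.exp (L * (c₂ * s)) + k with hg
  have hfd : ∀ s, HasDerivAt f (g s) s := fun s => stmt4_hasDerivAt A₁ A₂ c₁ c₂ k s
  have hderiv : ∀ s, deriv f s = g s := fun s => (hfd s).deriv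
  -- g is strictly monotone
  have hgmono : StrictMono g := by
    have m1 : StrictMono (fun s : ℝ => A₁ * c₁ * L * Real.exp (L * (c₁ * s))) := by
      intro a b hab
      have : L * (c₁ * a) < L * (c₁ * b) := by
        apply mul_lt_mul_of_pos_left (mul_lt_mul_of_pos_left hab hc₁) hLpos
      exact mul_lt_mul_of_pos_left (Real.exp_lt_exp.2 this)
        (by positivity)
    have m2 : StrictMono (fun s : ℝ => A₂ * c₂ * L * Real.exp (L * (c₂ * s))) := by
      intro a b hab
      have : L * (c₂ * a) < L * (c₂ * b) := by
        apply mul_lt_mul_of_pos_left (mul_lt_mul_of_pos_left hab hc₂) hLpos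
      exact mul_lt_mul_of_pos_left (Real.exp_lt_exp.2 this) (by positivity)
    intro a b hab
    have := add_lt_add_right (add_lt_add (m1 hab) (m2 hab)) k
    simpa [hg] using this
  have hg0 : g 0 < 0 := by
    simp only [hg, mul_zero, Real.exp_zero, mul_one]
    linarith
  -- g is eventually positive
  have hgcont : Continuous g := by
    simp only [hg]
    fun_prop
  obtain ⟨T, hT0, hgT⟩ : ∃ T : ℝ, 0 < T ∧ 0 < g T := by
    have h1g : 0 < 1 - g 0 := by linarith
    have hden : 0 < A₁ * c₁ * c₁ * L * L := by positivity
    refine ⟨(1 - g 0) / (A₁ * c₁ * c₁ * L * L), div_pos h1g hden, ?_⟩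
    set T := (1 - g 0) / (A₁ * c₁ * c₁ * L * L) with hT
    have hTpos : 0 < T := div_pos h1g hden
    have he1 : 1 + L * (c₁ * T) ≤ Real.exp (L * (c₁ * T)) := by
      linarith [Real.add_one_le_exp (L * (c₁ * T))]
    have he2 : (1:ℝ) ≤ Real.exp (L * (c₂ * T)) := Real.one_le_exp (by positivity)
    have key : g 0 + A₁ * c₁ * c₁ * L * L * T ≤ g T := by
      simp only [hg, mul_zero, Real.exp_zero, mul_one]
      nlinarith [mul_le_mul_of_nonneg_left he1 (by positivity : (0:ℝ) ≤ A₁ * c₁ * L),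
        mul_le_mul_of_nonneg_left he2 (by positivity : (0:ℝ) ≤ A₂ * c₂ * L)]
    have : A₁ * c₁ * c₁ * L * L * T = 1 - g 0 := by
      rw [hT]; field_simp
    linarith
  -- unique root of g in (0, T)
  obtain ⟨sstar, hsmem, hgs⟩ : ∃ s ∈ Set.Icc (0:ℝ) T, g s = 0 := by
    have := intermediate_value_Icc hT0.le hgcont.continuousOn
    exact this ⟨hg0.le, hgT.le⟩
  have hspos : 0 < sstar := by
    rcases lt_or_eq_of_le hsmem.1 with h | h
    · exact h
    · exfalso; rw [← h] at hgs; linarith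
  -- monotonicity of f around sstar
  have hfc : Continuous f := continuous_iff_continuousAt.2 fun x => (hfd x).continuousAt
  have hanti : StrictAntiOn f (Set.Icc 0 sstar) := by
    apply strictAntiOn_of_deriv_neg (convex_Icc _ _) hfc.continuousOn
    intro x hx
    rw [interior_Icc] at hx
    rw [hderiv]
    have : g x < g sstar := hgmono hx.2
    linarith [hgs ▸ this]
  have hmono : StrictMonoOn f (Set.Ici sstar) := by
    apply strictMonoOn_of_deriv_pos (convex_Ici _) hfc.continuousOn
    intro x hx
    rw [interior_Ici] at hx
    rw [hderiv]
    have : g sstar < g x := hgmono hx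
    linarith [hgs ▸ this]
  refine ⟨sstar, ⟨hspos, by rw [hderiv]; exact hgs, ?_⟩, ?_⟩
  · intro s hs hne
    rcases lt_or_gt_of_ne hne with h | h
    · exact hanti ⟨hs, h.le⟩ ⟨hspos.le, le_refl _⟩ h
    · exact hmono (Set.mem_Ici.2 (le_refl _)) h.le h
  · rintro y ⟨hy0, hyd, -⟩
    have : g y = 0 := by rw [← hderiv]; exact hyd
    exact hgmono.injective (this.trans hgs.symm)
end

section
/- Let σ² > 0, Γ ≥ 1, N > 0, γ > 0, B > 0, ν > 0, s > 0, 0 ≤ w < 1 and c > 0. Then there exists a unique t > 0 satisfying the stationarity equation (1 − w)·[ (2^(s/(ν B t)) − 1)·Γσ²/(Nγ) − (s·ln 2/(ν B t))·2^(s/(ν B t))·Γσ²/(Nγ) ] + c = 0. -/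
noncomputable def fA (x : ℝ) : ℝ :=
  Real.exp (Real.log 2 * x) - 1 - Real.log 2 * x * Real.exp (Real.log 2 * x)

lemma fA_hasDeriv (x : ℝ) :
    HasDerivAt fA (-(Real.log 2 ^ 2 * x * Real.exp (Real.log 2 * x))) x := by
  have h1 : HasDerivAt (fun y : ℝ => Real.log 2 * y) (Real.log 2) x := by
    simpa using (hasDerivAt_id x).const_mul (Real.log 2)
  have h2 : HasDerivAt (fun y : ℝ => Real.exp (Real.log 2 * y))
      (Real.exp (Real.log 2 * x) * Real.log 2) x := h1.exp
  have h3 := ((h2.sub_const 1).sub (h1.mul h2))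
  convert h3 using 1
  · rfl
  · rfl
  · rfl
  ring

lemma fA_anti : StrictAntiOn fA (Set.Ici 0) := by
  have hL : Real.log 2 ≠ 0 := by
    have := Real.log_pos (by norm_num : (1:ℝ) < 2); linarith
  apply strictAntiOn_of_deriv_neg (convex_Ici 0)
  · exact fun x _ => (fA_hasDeriv x).continuousAt.continuousWithinAt
  · intro x hx
    rw [interior_Ici] at hx
    rw [(fA_hasDeriv x).deriv]
    have hx' : 0 < x := hx
    have hL2 : 0 < Real.log 2 := Real.log_pos (by norm_num)
    have : 0 < Real.log 2 ^ 2 * x * Real.exp (Real.log 2 * x) :=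
      mul_pos (mul_pos (pow_pos hL2 2) hx') (Real.exp_pos _)
    linarith

lemma key (d : ℝ) (hd : d < 0) : ∃! x : ℝ, 0 < x ∧ fA x = d := by
  have hL : 0 < Real.log 2 := Real.log_pos (by norm_num)
  set b : ℝ := max 2 (-d) / Real.log 2 with hb
  have hb2 : Real.log 2 * b = max 2 (-d) := by
    rw [hb]; field_simp
  have hbpos : 0 < b := by
    rw [hb]; positivity
  have hLb2 : (2:ℝ) ≤ Real.log 2 * b := hb2 ▸ le_max_left _ _
  have hexp : -d < Real.exp (Real.log 2 * b) := by
    have h1 : Real.log 2 * b + 1 ≤ Real.exp (Real.log 2 * b) := Real.add_one_le_exp _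
    have h2 : -d ≤ Real.log 2 * b := hb2 ▸ le_max_right _ _
    linarith
  have hfb : fA b < d := by
    unfold fA
    have hepos : 0 < Real.exp (Real.log 2 * b) := Real.exp_pos _
    nlinarith
  have hf0 : fA 0 = 0 := by simp [fA]
  have hcont : ContinuousOn fA (Set.Icc 0 b) :=
    fun x _ => (fA_hasDeriv x).continuousAt.continuousWithinAt
  have hmem : d ∈ Set.Icc (fA b) (fA 0) := ⟨le_of_lt hfb, by rw [hf0]; linarith⟩
  obtain ⟨x, hxmem, hfx⟩ := intermediate_value_Icc' (le_of_lt hbpos) hcont hmem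
  have hx0 : 0 < x := by
    rcases lt_or_eq_of_le hxmem.1 with h | h
    · exact h
    · exfalso; rw [← h, hf0] at hfx; linarith
  refine ⟨x, ⟨hx0, hfx⟩, ?_⟩
  rintro y ⟨hy0, hfy⟩
  exact fA_anti.injOn (le_of_lt hy0) (le_of_lt hx0) (by rw [hfy, hfx])

/-- Theorem 1 for the uplink offloading time: for `σ² > 0`, `Γ ≥ 1`,
`N, γ, B, ν, s > 0`, `0 ≤ w < 1` and `c > 0`, the KKT stationarity equation (25)
`(1 − w)·[(2^(s/(νBt)) − 1)·Γσ²/(Nγ) − (s·ln 2/(νBt))·2^(s/(νBt))·Γσ²/(Nγ)] + c = 0`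
has a unique positive solution `t`. -/
theorem stmt12 (σ2 Γ N γ B ν s w c : ℝ) (hσ2 : 0 < σ2) (hΓ : 1 ≤ Γ) (hN : 0 < N)
    (hγ : 0 < γ) (hB : 0 < B) (hν : 0 < ν) (hs : 0 < s) (hw₀ : 0 ≤ w) (hw₁ : w < 1)
    (hc : 0 < c) :
    ∃! t : ℝ, 0 < t ∧
      (1 - w) * (((2 : ℝ) ^ (s / (ν * B * t)) - 1) * Γ * σ2 / (N * γ)
        - (s * Real.log 2 / (ν * B * t)) * (2 : ℝ) ^ (s / (ν * B * t)) * Γ * σ2 / (N * γ))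
        + c = 0 := by
  have hΓ0 : 0 < Γ := lt_of_lt_of_le one_pos hΓ
  set K : ℝ := Γ * σ2 / (N * γ) with hK
  have hK0 : 0 < K := by rw [hK]; positivity
  have hw : 0 < 1 - w := by linarith
  have hP : 0 < (1 - w) * K := by positivity
  set d : ℝ := -c / ((1 - w) * K) with hd
  have hd0 : d < 0 := by
    rw [hd]; exact div_neg_of_neg_of_pos (by linarith) hP
  obtain ⟨x₀, ⟨hx₀, hfx₀⟩, hxu⟩ := key d hd0
  have hequiv : ∀ t : ℝ, 0 < t →
      ((1 - w) * (((2 : ℝ) ^ (s / (ν * B * t)) - 1) * Γ * σ2 / (N * γ)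
        - (s * Real.log 2 / (ν * B * t)) * (2 : ℝ) ^ (s / (ν * B * t)) * Γ * σ2 / (N * γ))
        + c = 0 ↔ fA (s / (ν * B * t)) = d) := by
    intro t ht
    set x : ℝ := s / (ν * B * t) with hx
    have h2x : (2 : ℝ) ^ x = Real.exp (Real.log 2 * x) :=
      Real.rpow_def_of_pos (by norm_num) x
    have hmul : s * Real.log 2 / (ν * B * t) = Real.log 2 * x := by
      rw [hx]; ring
    rw [h2x, hmul]
    have hlhs : (1 - w) * ((Real.exp (Real.log 2 * x) - 1) * Γ * σ2 / (N * γ)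
        - Real.log 2 * x * Real.exp (Real.log 2 * x) * Γ * σ2 / (N * γ)) + c
        = (1 - w) * K * fA x + c := by
      rw [hK]; unfold fA; ring
    rw [hlhs]
    constructor
    · intro h
      rw [hd]
      field_simp
      linarith
    · intro h
      rw [h, hd]
      field_simp
      ring
  refine ⟨s / (ν * B * x₀), ⟨by positivity, ?_⟩, ?_⟩
  · rw [hequiv _ (by positivity)]
    have : s / (ν * B * (s / (ν * B * x₀))) = x₀ := by
      field_simp
    rw [this]; exact hfx₀
  · rintro t ⟨ht, heq⟩
    rw [hequiv t ht] at heq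
    have hxt : s / (ν * B * t) = x₀ := by
      apply hxu
      exact ⟨by positivity, heq⟩
    have : t = s / (ν * B * x₀) := by
      rw [← hxt]
      field_simp
    exact this
end
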